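/- For all positive integers p and q, the complete bipartite graph K_{p,q} admits a crossing-free circular-arc drawing in ℝ³ covered by a family of at most ⌈p/2⌉·⌈q/2⌉ circles. -/

import Mathlib

open Set

noncomputable section

/-- An `l`-dimensional sphere in `ℝ^d`: the set of points of an `(l+1)`-dimensional affine
subspace `P` of `ℝ^d` at a fixed positive distance `r` from a center `c ∈ P`. -/
def IsSphereDim (d l : ℕ) (S : Set (EuclideanSpace ℝ (Fin d))) : Prop :=
  ∃ (P : AffineSubspace ℝ (EuclideanSpace ℝ (Fin d))) (c : EuclideanSpace ℝ (Fin d)) (r : ℝ),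
    Module.finrank ℝ P.direction = l + 1 ∧ c ∈ P ∧ 0 < r ∧
    S = {x | x ∈ P ∧ dist x c = r}

/-- A circle in `ℝ^d` is a 1-dimensional sphere. -/
def IsCircle (d : ℕ) (S : Set (EuclideanSpace ℝ (Fin d))) : Prop :=
  IsSphereDim d 1 S

/-- An arc in `ℝ^d`: a nonempty compact connected subset of a circle. -/
def IsArc (d : ℕ) (A : Set (EuclideanSpace ℝ (Fin d))) : Prop :=
  ∃ C, IsCircle d C ∧ A ⊆ C ∧ IsCompact A ∧ IsConnected A

/-- A crossing-free circular-arc drawing of a simple graph `G` in `ℝ^d`: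
vertices are mapped injectively to points, every edge `e = uv` is represented by an arc
`arc e` containing the images of `u` and `v`, the arcs of two distinct edges intersect
exactly in the images of the common endpoints of those edges, and the image of a vertex `w`
lies on the arc of an edge `e` only if `w` is an endpoint of `e`. -/
structure CircularArcDrawing (d : ℕ) {V : Type*} (G : SimpleGraph V) where
  pos : V → EuclideanSpace ℝ (Fin d)
  inj : Function.Injective pos
  arc : Sym2 V → Set (EuclideanSpace ℝ (Fin d))
  arc_isArc : ∀ e ∈ G.edgeSet, IsArc d (arc e)
  endpoint_mem : ∀ e ∈ G.edgeSet, ∀ v ∈ e, pos v ∈ arc e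
  crossFree : ∀ e ∈ G.edgeSet, ∀ f ∈ G.edgeSet, e ≠ f →
    arc e ∩ arc f = pos '' {w | w ∈ e ∧ w ∈ f}
  vertex_mem : ∀ e ∈ G.edgeSet, ∀ w, pos w ∈ arc e → w ∈ e

/-- The drawing `D` is covered by the family `𝒞` of sets:
every arc of `D` is contained in some member of `𝒞`. -/
def CircularArcDrawing.CoveredBy {d : ℕ} {V : Type*} {G : SimpleGraph V}
    (D : CircularArcDrawing d G) (𝒞 : Finset (Set (EuclideanSpace ℝ (Fin d)))) : Prop :=
  ∀ e ∈ G.edgeSet, ∃ C ∈ 𝒞, D.arc e ⊆ C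


open Real RealInnerProductSpace

set_option maxHeartbeats 1000000

local notation "E3" => EuclideanSpace ℝ (Fin 3)

lemma round_window (θ : ℝ) : |θ - 2*(round (θ/(2*π)) : ℤ)*π| ≤ π := by
  have hπ := Real.pi_pos
  have h2π : (0:ℝ) < 2*π := by linarith
  have hr : |θ / (2*π) - (round (θ/(2*π)) : ℤ)| ≤ 1/2 := abs_sub_round _
  have e1 : θ - 2*(round (θ/(2*π)) : ℤ)*π = (θ/(2*π) - (round (θ/(2*π)) : ℤ)) * (2*π) := by
    field_simp
  rw [e1, abs_mul, abs_of_pos h2π]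
  calc |θ/(2*π) - (round (θ/(2*π)) : ℤ)| * (2*π) ≤ (1/2)*(2*π) :=
        mul_le_mul_of_nonneg_right hr (le_of_lt h2π)
    _ = π := by ring

lemma cos_per (θ : ℝ) (k : ℤ) : Real.cos (θ - 2*k*π) = Real.cos θ := by
  have := Real.cos_sub_int_mul_two_pi θ k
  rw [← this]; ring_nf

lemma myCos_ge_iff {δ : ℝ} (h0 : 0 ≤ δ) (h1 : δ ≤ π) (θ : ℝ) :
    Real.cos δ ≤ Real.cos θ ↔ ∃ k : ℤ, |θ - 2*k*π| ≤ δ := by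
  constructor
  · intro h
    refine ⟨round (θ / (2*π)), ?_⟩
    have habs := round_window θ
    by_contra hcon
    push_neg at hcon
    have hc1 : Real.cos |θ - 2*(round (θ/(2*π)) : ℤ)*π| < Real.cos δ :=
      Real.strictAntiOn_cos ⟨h0, h1⟩ ⟨abs_nonneg _, habs⟩ hcon
    rw [Real.cos_abs, cos_per] at hc1
    linarith
  · rintro ⟨k, hk⟩
    rw [← cos_per θ k, ← Real.cos_abs (θ - 2*k*π)]
    exact Real.cos_le_cos_of_nonneg_of_le_pi (abs_nonneg _) h1 hk

lemma myCos_gt_iff {δ : ℝ} (h0 : 0 ≤ δ) (h1 : δ ≤ π) (θ : ℝ) :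
    Real.cos δ < Real.cos θ ↔ ∃ k : ℤ, |θ - 2*k*π| < δ := by
  constructor
  · intro h
    refine ⟨round (θ / (2*π)), ?_⟩
    have habs := round_window θ
    by_contra hcon
    push_neg at hcon
    have hc1 : Real.cos θ ≤ Real.cos δ := by
      rw [← cos_per θ (round (θ/(2*π))), ← Real.cos_abs (θ - 2*(round (θ/(2*π)) : ℤ)*π)]
      exact Real.cos_le_cos_of_nonneg_of_le_pi h0 habs hcon
    linarith
  · rintro ⟨k, hk⟩
    rw [← cos_per θ k, ← Real.cos_abs (θ - 2*k*π)]
    exact Real.strictAntiOn_cos ⟨abs_nonneg _, by linarith [abs_nonneg (θ - 2*k*π)]⟩ ⟨h0, h1⟩ hk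


lemma sin_per (θ : ℝ) (k : ℤ) : Real.sin (θ - 2*k*π) = Real.sin θ := by
  have := Real.sin_sub_int_mul_two_pi θ k
  rw [← this]; ring_nf

/-- Rewrite a trig polynomial in phase-amplitude form (when non-degenerate). -/
lemma trig_amp (A' B' C' : ℝ) (hBC : ¬ (B' = 0 ∧ C' = 0)) :
    ∃ ρ' ψ : ℝ, 0 < ρ' ∧ ∀ θ, A' + B' * Real.cos θ + C' * Real.sin θ
      = A' + ρ' * Real.cos (θ - ψ) := by
  set ρ' := Real.sqrt (B'^2 + C'^2) with hρ'def
  have hρ' : 0 < ρ' := by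
    apply Real.sqrt_pos.2
    rcases not_and_or.1 hBC with h | h <;> positivity
  set z : ℂ := ⟨B', C'⟩ with hzdef
  have hz : z ≠ 0 := fun h => hBC ⟨congrArg Complex.re h, congrArg Complex.im h⟩
  have habsz : ‖z‖ = ρ' := by
    rw [Complex.norm_def, Complex.normSq_mk]; congr 1; ring
  refine ⟨ρ', z.arg, hρ', fun θ => ?_⟩
  have hcosψ : Real.cos z.arg = B' / ρ' := by
    have := Complex.cos_arg hz; rw [habsz] at this; exact this
  have hsinψ : Real.sin z.arg = C' / ρ' := by
    have := Complex.sin_arg z; rw [habsz] at this; exact this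
  rw [Real.cos_sub, hcosψ, hsinψ]
  field_simp; ring

/-- Case A of the core interval lemma. -/
lemma core2A (A ρ A' B' C' : ℝ) (hρ : 0 < ρ) (hA : |A| < ρ)
    (hp : 0 < A' + B' * Real.cos (Real.arccos (-A/ρ)) + C' * Real.sin (Real.arccos (-A/ρ)))
    (hn : A' + B' * Real.cos (-(Real.arccos (-A/ρ))) + C' * Real.sin (-(Real.arccos (-A/ρ))) < 0) :
    ∃ a b : ℝ,
      (∀ θ ∈ Set.Icc a b, 0 ≤ A + ρ * Real.cos θ ∧ 0 ≤ A' + B' * Real.cos θ + C' * Real.sin θ) ∧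
      ∀ x, 0 ≤ A + ρ * Real.cos x → 0 ≤ A' + B' * Real.cos x + C' * Real.sin x →
        ∃ θ ∈ Set.Icc a b, ∃ k : ℤ, x = θ + 2*k*π := by
  have hπ := Real.pi_pos
  rw [abs_lt] at hA
  have hb1 : (-1:ℝ) < -A/ρ := by rw [neg_lt, ← neg_div, div_lt_one hρ]; linarith [hA.1, hA.2]
  have hb2 : -A/ρ < 1 := by rw [div_lt_one hρ]; linarith [hA.1, hA.2]
  have hcosδ0 : Real.cos (Real.arccos (-A/ρ)) = -A/ρ :=
    Real.cos_arccos (le_of_lt hb1) (le_of_lt hb2)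
  have hδ00 : 0 < Real.arccos (-A/ρ) := Real.arccos_pos.2 hb2
  have hδπ0 : Real.arccos (-A/ρ) ≤ π := Real.arccos_le_pi _
  obtain ⟨δ, hδdef⟩ : ∃ δ, Real.arccos (-A/ρ) = δ := ⟨_, rfl⟩
  rw [hδdef] at hp hn hcosδ0 hδ00 hδπ0
  have hδπ : δ < π := by
    rcases lt_or_eq_of_le hδπ0 with h | h
    · exact h
    · exfalso; rw [h, Real.cos_pi] at hcosδ0
      have : A = ρ := by field_simp at hcosδ0; linarith
      linarith [hA.2]
  -- G x ≥ 0 iff cos x ≥ cos δ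
  have hGge : ∀ x, 0 ≤ A + ρ * Real.cos x ↔ Real.cos δ ≤ Real.cos x := by
    intro x
    rw [hcosδ0]
    constructor
    · intro h; rw [div_le_iff₀ hρ]; nlinarith
    · intro h; rw [div_le_iff₀ hρ] at h; nlinarith
  -- amplitude form for H
  have hBC : ¬ (B' = 0 ∧ C' = 0) := by
    rintro ⟨hb, hc⟩
    rw [hb, hc] at hp hn; simp at hp hn; linarith
  obtain ⟨ρ', ψ0, hρ', hHform⟩ := trig_amp A' B' C' hBC
  -- |A'| < ρ'
  have hA'1 : -ρ' < A' := by
    have h1 := hHform δ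
    have hcb := Real.cos_le_one (δ - ψ0)
    nlinarith [hp, h1]
  have hA'2 : A' < ρ' := by
    have h1 := hHform (-δ)
    have hcb := Real.neg_one_le_cos (-δ - ψ0)
    nlinarith [hn, h1]
  have hb1' : (-1:ℝ) < -A'/ρ' := by rw [neg_lt, ← neg_div, div_lt_one hρ']; linarith
  have hb2' : -A'/ρ' < 1 := by rw [div_lt_one hρ']; linarith
  have hcosδ'0 : Real.cos (Real.arccos (-A'/ρ')) = -A'/ρ' :=
    Real.cos_arccos (le_of_lt hb1') (le_of_lt hb2')
  have hδ'00 : 0 < Real.arccos (-A'/ρ') := Real.arccos_pos.2 hb2'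
  have hδ'π0 : Real.arccos (-A'/ρ') ≤ π := Real.arccos_le_pi _
  obtain ⟨δ', hδ'def⟩ : ∃ δ', Real.arccos (-A'/ρ') = δ' := ⟨_, rfl⟩
  rw [hδ'def] at hcosδ'0 hδ'00 hδ'π0
  -- characterizations for H
  have hHge : ∀ x, 0 ≤ A' + B' * Real.cos x + C' * Real.sin x ↔
      ∃ k : ℤ, |x - ψ0 - 2*k*π| ≤ δ' := by
    intro x
    rw [hHform x]
    have key : 0 ≤ A' + ρ' * Real.cos (x - ψ0) ↔ Real.cos δ' ≤ Real.cos (x - ψ0) := by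
      rw [hcosδ'0]
      constructor
      · intro h; rw [div_le_iff₀ hρ']; nlinarith
      · intro h; rw [div_le_iff₀ hρ'] at h; nlinarith
    rw [key, myCos_ge_iff (le_of_lt hδ'00) hδ'π0 (x - ψ0)]
  have hHgt : ∀ x, 0 < A' + B' * Real.cos x + C' * Real.sin x →
      ∃ k : ℤ, |x - ψ0 - 2*k*π| < δ' := by
    intro x h
    rw [hHform x] at h
    have key : Real.cos δ' < Real.cos (x - ψ0) := by
      rw [hcosδ'0, div_lt_iff₀ hρ']; nlinarith
    exact (myCos_gt_iff (le_of_lt hδ'00) hδ'π0 (x - ψ0)).1 key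
  have hHneg : ∀ x, A' + B' * Real.cos x + C' * Real.sin x < 0 →
      ∀ k : ℤ, δ' < |x - ψ0 - 2*k*π| := by
    intro x h k
    by_contra hcon
    push_neg at hcon
    have : 0 ≤ A' + B' * Real.cos x + C' * Real.sin x := (hHge x).2 ⟨k, hcon⟩
    linarith
  rcases hHgt δ hp with ⟨k₀, hk₀⟩
  rw [abs_lt] at hk₀
  have hmδ : -δ < ψ0 + 2*k₀*π - δ' := by
    have h2 := hHneg (-δ) hn k₀
    rw [lt_abs] at h2
    rcases h2 with h2 | h2
    · linarith [hk₀.2]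
    · linarith
  refine ⟨ψ0 + 2*k₀*π - δ', δ, ?_, ?_⟩
  · rintro θ ⟨hθ1, hθ2⟩
    constructor
    · rw [hGge θ]
      apply (myCos_ge_iff (le_of_lt hδ00) hδπ0 θ).2 ⟨0, ?_⟩
      push_cast
      rw [abs_le]; constructor <;> [linarith; linarith]
    · apply (hHge θ).2 ⟨k₀, ?_⟩
      rw [abs_le]; constructor <;> [linarith; linarith [hk₀.1]]
  · intro x hGx hHx
    rcases (myCos_ge_iff (le_of_lt hδ00) hδπ0 x).1 ((hGge x).1 hGx) with ⟨k₁, hk₁⟩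
    rw [abs_le] at hk₁
    have hHθ₁ : 0 ≤ A' + B' * Real.cos (x - 2*k₁*π) + C' * Real.sin (x - 2*k₁*π) := by
      rw [cos_per x k₁, sin_per x k₁]; exact hHx
    rcases (hHge _).1 hHθ₁ with ⟨k₂, hk₂⟩
    rw [abs_le] at hk₂
    have hk₂eq : k₂ = k₀ := by
      rcases lt_trichotomy k₂ k₀ with h | h | h
      · exfalso
        have hc : (k₂:ℝ) + 1 ≤ (k₀:ℝ) := by exact_mod_cast Int.add_one_le_iff.mpr h
        have hmul : 2*(k₂:ℝ)*π + 2*π ≤ 2*(k₀:ℝ)*π := by nlinarith [hc, hπ]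
        have hnδ := hHneg (-δ) hn k₂
        rw [lt_abs] at hnδ
        rcases hnδ with h2 | h2
        · linarith [hk₁.1, hk₂.2]
        · linarith [hk₀.1, h2, hmul, hπ, hδπ]
      · exact h
      · exfalso
        have hc : (k₀:ℝ) + 1 ≤ (k₂:ℝ) := by exact_mod_cast Int.add_one_le_iff.mpr h
        have hmul : 2*(k₀:ℝ)*π + 2*π ≤ 2*(k₂:ℝ)*π := by nlinarith [hc, hπ]
        linarith [hk₁.2, hk₂.1, hmδ, hπ, hδπ]
    subst hk₂eq
    exact ⟨x - 2*k₁*π, ⟨by linarith [hk₂.1], by linarith [hk₁.2]⟩, k₁, by ring⟩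

lemma coreGen (A B C A' B' C' θ₁ θ₂ θ₃ : ℝ)
    (h1 : A + B*Real.cos θ₁ + C*Real.sin θ₁ = 0)
    (h2 : A + B*Real.cos θ₂ + C*Real.sin θ₂ = 0)
    (hne : ∀ k : ℤ, θ₁ ≠ θ₂ + 2*k*π)
    (h3 : A + B*Real.cos θ₃ + C*Real.sin θ₃ ≠ 0)
    (hs : (A' + B'*Real.cos θ₁ + C'*Real.sin θ₁) * (A' + B'*Real.cos θ₂ + C'*Real.sin θ₂) < 0) :
    ∃ a b : ℝ,
      (∀ θ ∈ Set.Icc a b, 0 ≤ A + B*Real.cos θ + C*Real.sin θ ∧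
        0 ≤ A' + B'*Real.cos θ + C'*Real.sin θ) ∧
      ∀ x, 0 ≤ A + B*Real.cos x + C*Real.sin x → 0 ≤ A' + B'*Real.cos x + C'*Real.sin x →
        ∃ θ ∈ Set.Icc a b, ∃ k : ℤ, x = θ + 2*k*π := by
  have hπ := Real.pi_pos
  have hBC : ¬ (B = 0 ∧ C = 0) := by
    rintro ⟨hb, hc⟩
    rw [hb, hc] at h1 h3
    simp at h1 h3
    exact h3 h1
  obtain ⟨ρ, φ, hρ, hGform⟩ := trig_amp A B C hBC
  have hz1 : Real.cos (θ₁ - φ) = -A/ρ := by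
    have := hGform θ₁; rw [h1] at this; field_simp at this ⊢; linarith
  have hz2 : Real.cos (θ₂ - φ) = -A/ρ := by
    have := hGform θ₂; rw [h2] at this; field_simp at this ⊢; linarith
  have hAle : |A| ≤ ρ := by
    have h := Real.neg_one_le_cos (θ₁ - φ)
    have h' := Real.cos_le_one (θ₁ - φ)
    rw [hz1] at h h'
    have hA1 : -A ≤ ρ := (div_le_one hρ).1 h'
    have hA2 : A ≤ ρ := by
      have hq : A/ρ ≤ 1 := by rw [neg_div] at h; linarith
      exact (div_le_one hρ).1 hq
    exact abs_le.2 ⟨by linarith, hA2⟩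
  have hb2 : -A/ρ ≤ 1 := by
    apply (div_le_one hρ).2; rw [abs_le] at hAle; linarith [hAle.1]
  have hb1 : (-1:ℝ) ≤ -A/ρ := by
    rw [neg_div]
    have : A/ρ ≤ 1 := (div_le_one hρ).2 (by rw [abs_le] at hAle; linarith [hAle.2])
    linarith
  have hcosδ : Real.cos (Real.arccos (-A/ρ)) = -A/ρ := Real.cos_arccos hb1 hb2
  have hδ0 : 0 ≤ Real.arccos (-A/ρ) := Real.arccos_nonneg _
  have hδπ : Real.arccos (-A/ρ) ≤ π := Real.arccos_le_pi _
  set δ := Real.arccos (-A/ρ) with hδdef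
  -- zeros are at ±δ mod 2π
  have hzero : ∀ θ, Real.cos (θ - φ) = -A/ρ → ∃ k : ℤ, θ - φ - 2*k*π = δ ∨ θ - φ - 2*k*π = -δ := by
    intro θ hθ
    have hge : Real.cos δ ≤ Real.cos (θ - φ) := by rw [hθ, hcosδ]
    rcases (myCos_ge_iff hδ0 hδπ (θ - φ)).1 hge with ⟨k, hk⟩
    have hngt : ¬ Real.cos δ < Real.cos (θ - φ) := by rw [hθ, hcosδ]; exact lt_irrefl _
    have : ¬ |θ - φ - 2*k*π| < δ := fun hc => hngt ((myCos_gt_iff hδ0 hδπ (θ - φ)).2 ⟨k, hc⟩)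
    push_neg at this
    have heq : |θ - φ - 2*k*π| = δ := le_antisymm hk this
    rcases abs_eq (by linarith [abs_nonneg (θ - φ - 2*k*π), heq] : (0:ℝ) ≤ δ) |>.1 heq with h | h
    · exact ⟨k, Or.inl h⟩
    · exact ⟨k, Or.inr h⟩
  obtain ⟨k₁, hk₁⟩ := hzero θ₁ hz1
  obtain ⟨k₂, hk₂⟩ := hzero θ₂ hz2
  -- mixed signs, and 0 < δ < π
  have hmixed : (θ₁ - φ - 2*k₁*π = δ ∧ θ₂ - φ - 2*k₂*π = -δ ∧ 0 < δ ∧ δ < π) ∨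
      (θ₁ - φ - 2*k₁*π = -δ ∧ θ₂ - φ - 2*k₂*π = δ ∧ 0 < δ ∧ δ < π) := by
    have hδne0 : ∀ (s₁ s₂ : ℝ), θ₁ - φ - 2*k₁*π = s₁ → θ₂ - φ - 2*k₂*π = s₂ → s₁ - s₂ = 0 ∨ s₁ - s₂ = 2*π ∨ s₁ - s₂ = -(2*π) → False := by
      intro s₁ s₂ e1 e2 hd
      rcases hd with hd | hd | hd
      · exact hne (k₁ - k₂) (by push_cast; linarith)
      · exact hne (k₁ - k₂ + 1) (by push_cast; linarith)
      · exact hne (k₁ - k₂ - 1) (by push_cast; linarith)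
    rcases hk₁ with e1 | e1 <;> rcases hk₂ with e2 | e2
    · exact (hδne0 _ _ e1 e2 (Or.inl (by ring))).elim
    · -- +, - : need 0 < δ < π
      have hδne : δ ≠ 0 := fun h => hδne0 _ _ e1 e2 (by rw [h]; norm_num)
      have hδneπ : δ ≠ π := fun h => hδne0 _ _ e1 e2 (by rw [h]; right; left; ring)
      exact Or.inl ⟨e1, e2, lt_of_le_of_ne hδ0 (Ne.symm hδne), lt_of_le_of_ne hδπ hδneπ⟩
    · have hδne : δ ≠ 0 := fun h => hδne0 _ _ e1 e2 (by rw [h]; norm_num)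
      have hδneπ : δ ≠ π := fun h => hδne0 _ _ e1 e2 (by rw [h]; right; right; ring)
      exact Or.inr ⟨e1, e2, lt_of_le_of_ne hδ0 (Ne.symm hδne), lt_of_le_of_ne hδπ hδneπ⟩
    · exact (hδne0 _ _ e1 e2 (Or.inl (by ring))).elim
  have hA : |A| < ρ := by
    have hδ0' : 0 < δ := by rcases hmixed with ⟨_,_,h,_⟩ | ⟨_,_,h,_⟩ <;> exact h
    have hδπ' : δ < π := by rcases hmixed with ⟨_,_,_,h⟩ | ⟨_,_,_,h⟩ <;> exact h
    have c1 : Real.cos δ < 1 := by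
      calc Real.cos δ < Real.cos 0 := Real.strictAntiOn_cos ⟨le_refl _, by linarith⟩ ⟨hδ0, hδπ⟩ hδ0'
        _ = 1 := Real.cos_zero
    have c2 : -1 < Real.cos δ := by
      calc (-1:ℝ) = Real.cos π := Real.cos_pi.symm
        _ < Real.cos δ := Real.strictAntiOn_cos ⟨hδ0, hδπ⟩ ⟨by linarith, le_refl _⟩ hδπ'
    rw [hcosδ] at c1 c2
    have c1' : -A < ρ := (div_lt_one hρ).1 c1
    have c2' : A < ρ := by
      apply (div_lt_one hρ).1
      rw [neg_div] at c2; linarith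
    exact abs_lt.2 ⟨by linarith, c2'⟩
  -- shifted H
  set B'' := B'*Real.cos φ + C'*Real.sin φ with hB''
  set C'' := C'*Real.cos φ - B'*Real.sin φ with hC''
  have hshift : ∀ s, A' + B''*Real.cos s + C''*Real.sin s
      = A' + B'*Real.cos (s+φ) + C'*Real.sin (s+φ) := by
    intro s
    rw [Real.cos_add, Real.sin_add, hB'', hC'']; ring
  have hSHδ : (A' + B''*Real.cos δ + C''*Real.sin δ) * (A' + B''*Real.cos (-δ) + C''*Real.sin (-δ)) < 0 := by
    have per : ∀ (θ : ℝ) (k : ℤ), θ - φ - 2*k*π = δ ∨ θ - φ - 2*k*π = -δ →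
        (A' + B'*Real.cos θ + C'*Real.sin θ) = A' + B''*Real.cos (θ - φ - 2*k*π) + C''*Real.sin (θ - φ - 2*k*π) := by
      intro θ k _
      rw [hshift]
      have e1 : θ - φ - 2*k*π + φ = θ - 2*k*π := by ring
      rw [e1, cos_per, sin_per]
    rcases hmixed with ⟨e1, e2, _, _⟩ | ⟨e1, e2, _, _⟩
    · have p1 := per θ₁ k₁ (Or.inl e1); have p2 := per θ₂ k₂ (Or.inr e2)
      rw [e1] at p1; rw [e2] at p2
      rw [← p1, ← p2]; exact hs
    · have p1 := per θ₁ k₁ (Or.inr e1); have p2 := per θ₂ k₂ (Or.inl e2)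
      rw [e1] at p1; rw [e2] at p2
      rw [← p1, ← p2]
      nlinarith [hs]
  -- apply core2A in both sign cases
  rcases mul_neg_iff.1 hSHδ with ⟨hpos, hneg⟩ | ⟨hneg, hpos⟩
  · obtain ⟨a, b, hab1, hab2⟩ := core2A A ρ A' B'' C'' hρ hA hpos hneg
    refine ⟨a + φ, b + φ, ?_, ?_⟩
    · rintro θ ⟨ht1, ht2⟩
      have hm : θ - φ ∈ Set.Icc a b := ⟨by linarith, by linarith⟩
      obtain ⟨hg, hh⟩ := hab1 (θ - φ) hm
      constructor
      · rw [hGform θ]; exact hg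
      · have := hshift (θ - φ)
        rw [sub_add_cancel] at this
        linarith [this ▸ hh]
    · intro x hGx hHx
      have hGx' : 0 ≤ A + ρ * Real.cos (x - φ) := by rw [← hGform x]; exact hGx
      have hHx' : 0 ≤ A' + B''*Real.cos (x - φ) + C''*Real.sin (x - φ) := by
        have := hshift (x - φ)
        rw [sub_add_cancel] at this
        linarith
      obtain ⟨θ, hθmem, k, hk⟩ := hab2 (x - φ) hGx' hHx'
      exact ⟨θ + φ, ⟨by linarith [hθmem.1], by linarith [hθmem.2]⟩, k, by linarith⟩
  · -- reflection case
    obtain ⟨a, b, hab1, hab2⟩ := core2A A ρ A' B'' (-C'') hρ hA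
      (by rw [← hδdef]; rw [Real.cos_neg, Real.sin_neg] at hpos; linarith)
      (by rw [← hδdef, Real.cos_neg, Real.sin_neg]; linarith)
    refine ⟨-b + φ, -a + φ, ?_, ?_⟩
    · rintro θ ⟨ht1, ht2⟩
      have hm : -(θ - φ) ∈ Set.Icc a b := ⟨by linarith, by linarith⟩
      obtain ⟨hg, hh⟩ := hab1 (-(θ - φ)) hm
      rw [Real.cos_neg] at hg
      rw [Real.cos_neg, Real.sin_neg] at hh
      constructor
      · rw [hGform θ]; exact hg
      · have heq := hshift (θ - φ)
        rw [sub_add_cancel] at heq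
        have : 0 ≤ A' + B''*Real.cos (θ - φ) + C''*Real.sin (θ - φ) := by linarith
        linarith [heq ▸ this]
    · intro x hGx hHx
      have hGx' : 0 ≤ A + ρ * Real.cos (-(x - φ)) := by
        rw [Real.cos_neg, ← hGform x]; exact hGx
      have hHx' : 0 ≤ A' + B''*Real.cos (-(x - φ)) + (-C'')*Real.sin (-(x - φ)) := by
        rw [Real.cos_neg, Real.sin_neg]
        have := hshift (x - φ)
        rw [sub_add_cancel] at this
        have h2 : A' + B''*Real.cos (x-φ) + C''*Real.sin (x-φ) ≥ 0 := by linarith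
        linarith [h2]
      obtain ⟨θ, hθmem, k, hk⟩ := hab2 (-(x - φ)) hGx' hHx'
      refine ⟨-θ + φ, ⟨by linarith [hθmem.2], by linarith [hθmem.1]⟩, -k, ?_⟩
      push_cast
      linarith

/-- Main geometric lemma: a plane section of a sphere containing two distinct points is a
circle, and admits a trigonometric parametrization. -/
lemma sphere_plane_circle (o n : E3) (R k : ℝ) (hn : n ≠ 0)
    (x₀ x₁ : E3) (h₀p : ⟪x₀, n⟫ = k) (h₀s : dist x₀ o = R)
    (h₁p : ⟪x₁, n⟫ = k) (h₁s : dist x₁ o = R) (hne : x₀ ≠ x₁) :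
    IsCircle 3 {x : E3 | ⟪x, n⟫ = k ∧ dist x o = R} ∧
    ∃ (c : E3) (r : ℝ) (v₁ v₂ : E3), 0 < r ∧ ‖v₁‖ = 1 ∧ ‖v₂‖ = 1 ∧ ⟪v₁, v₂⟫ = 0 ∧
      (∀ x : E3, (⟪x, n⟫ = k ∧ dist x o = R) ↔
        ∃ θ : ℝ, x = c + (r * Real.cos θ) • v₁ + (r * Real.sin θ) • v₂) := by
  have hnne : ‖n‖ ≠ 0 := norm_ne_zero_iff.2 hn
  have hnn : (0:ℝ) < ‖n‖^2 := by positivity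
  set d : ℝ := (k - ⟪o, n⟫) / ‖n‖^2 with hd
  set c : E3 := o + d • n with hc
  have hcn : ⟪c, n⟫ = k := by
    rw [hc, inner_add_left, real_inner_smul_left, real_inner_self_eq_norm_sq, hd]
    field_simp
    ring
  have pyth : ∀ x : E3, ⟪x, n⟫ = k → dist x o ^ 2 = dist x c ^ 2 + ‖d • n‖^2 := by
    intro x hx
    have hdec : x - o = (x - c) + d • n := by rw [hc]; abel
    have horth : ⟪x - c, d • n⟫ = 0 := by
      rw [real_inner_smul_right, inner_sub_left, hx, hcn]; ring
    rw [dist_eq_norm, dist_eq_norm, hdec, norm_add_sq_real, horth]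
    ring
  set r : ℝ := dist x₀ c with hr
  have hr0 : 0 ≤ r := dist_nonneg
  have hR2 : R^2 = r^2 + ‖d • n‖^2 := by rw [← h₀s, pyth x₀ h₀p, hr]
  have hmem : ∀ x : E3, ⟪x, n⟫ = k → (dist x o = R ↔ dist x c = r) := by
    intro x hx
    have hsq := pyth x hx
    constructor
    · intro h
      have : dist x c ^ 2 = r ^ 2 := by rw [h] at hsq; linarith
      nlinarith [dist_nonneg (x := x) (y := c), hr0]
    · intro h
      have : dist x o ^2 = R^2 := by rw [h] at hsq; linarith
      have hRnn : 0 ≤ R := by rw [← h₀s]; exact dist_nonneg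
      nlinarith [dist_nonneg (x := x) (y := o)]
  have hrpos : 0 < r := by
    rcases lt_or_eq_of_le hr0 with h | h
    · exact h
    · exfalso
      have e0 : x₀ = c := by
        have : dist x₀ c = 0 := by rw [← hr, ← h]
        exact dist_eq_zero.1 this
      have e1 : x₁ = c := by
        have : dist x₁ c = r := (hmem x₁ h₁p).1 h₁s
        rw [← h] at this
        exact dist_eq_zero.1 this
      exact hne (e0.trans e1.symm)
  -- the plane as affine subspace
  set W : Submodule ℝ E3 := (ℝ ∙ n)ᗮ with hW
  have hWmem : ∀ v : E3, v ∈ W ↔ ⟪n, v⟫ = 0 := fun v =>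
    Submodule.mem_orthogonal_singleton_iff_inner_right ..
  have hWrank : Module.finrank ℝ W = 2 := by
    have h1 : Module.finrank ℝ (ℝ ∙ n) = 1 := finrank_span_singleton hn
    have h2 := Submodule.finrank_add_finrank_orthogonal (K := ℝ ∙ n) (E := E3)
    rw [h1, finrank_euclideanSpace_fin] at h2
    rw [hW]
    omega
  have hplane : ∀ x : E3, x ∈ AffineSubspace.mk' c W ↔ ⟪x, n⟫ = k := by
    intro x
    rw [AffineSubspace.mem_mk']
    have : (x -ᵥ c : E3) = x - c := rfl
    rw [this, hWmem, inner_sub_right, real_inner_comm x n, real_inner_comm c n, hcn]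
    constructor
    · intro h; linarith
    · intro h; rw [h]; ring
  constructor
  · refine ⟨AffineSubspace.mk' c W, c, r, ?_, AffineSubspace.self_mem_mk' _ _, hrpos, ?_⟩
    · rw [AffineSubspace.direction_mk']; exact hWrank
    · ext x
      simp only [Set.mem_setOf_eq, hplane x]
      exact and_congr_right (fun hx => hmem x hx)
  -- orthonormal basis of W
  · set b : OrthonormalBasis (Fin 2) ℝ W :=
      (stdOrthonormalBasis ℝ W).reindex (finCongr (by rw [hWrank])) with hb
    set v₁ : E3 := (b 0 : E3) with hv₁
    set v₂ : E3 := (b 1 : E3) with hv₂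
    have hortho := b.orthonormal
    rw [orthonormal_iff_ite] at hortho
    have h00 : ⟪v₁, v₁⟫ = 1 := by
      have := hortho 0 0; rw [if_pos rfl] at this
      rw [hv₁, ← Submodule.coe_inner]; exact_mod_cast this
    have h11 : ⟪v₂, v₂⟫ = 1 := by
      have := hortho 1 1; rw [if_pos rfl] at this
      rw [hv₂, ← Submodule.coe_inner]; exact_mod_cast this
    have h01 : ⟪v₁, v₂⟫ = 0 := by
      have := hortho 0 1; rw [if_neg (by decide)] at this
      rw [hv₁, hv₂, ← Submodule.coe_inner]; exact_mod_cast this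
    have hn1 : ‖v₁‖ = 1 := by
      have := h00; rw [real_inner_self_eq_norm_sq] at this
      nlinarith [norm_nonneg v₁]
    have hn2 : ‖v₂‖ = 1 := by
      have := h11; rw [real_inner_self_eq_norm_sq] at this
      nlinarith [norm_nonneg v₂]
    have hv₁W : v₁ ∈ W := (b 0).2
    have hv₂W : v₂ ∈ W := (b 1).2
    have hv₁n : ⟪v₁, n⟫ = 0 := by rw [real_inner_comm]; exact (hWmem v₁).1 hv₁W
    have hv₂n : ⟪v₂, n⟫ = 0 := by rw [real_inner_comm]; exact (hWmem v₂).1 hv₂W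
    have hspan : ∀ w : E3, w ∈ W → w = ⟪v₁, w⟫ • v₁ + ⟪v₂, w⟫ • v₂ := by
      intro w hw
      have := b.sum_repr' ⟨w, hw⟩
      rw [Fin.sum_univ_two] at this
      have hcoe := congrArg (Subtype.val) this
      push_cast at hcoe
      simp only [Submodule.coe_inner] at hcoe
      exact hcoe.symm
    refine ⟨c, r, v₁, v₂, hrpos, hn1, hn2, h01, ?_⟩
    intro x
    constructor
    · rintro ⟨hxp, hxs⟩
      have hwW : x - c ∈ W := by
        rw [hWmem, inner_sub_right, real_inner_comm x n, real_inner_comm c n, hxp, hcn]; ring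
      set a₁ : ℝ := ⟪v₁, x - c⟫ with ha₁
      set a₂ : ℝ := ⟪v₂, x - c⟫ with ha₂
      have hxdec : x - c = a₁ • v₁ + a₂ • v₂ := hspan (x - c) hwW
      have hnorm : a₁^2 + a₂^2 = r^2 := by
        have hsq : ‖x - c‖^2 = r^2 := by
          rw [← dist_eq_norm, (hmem x hxp).1 hxs]
        rw [hxdec, norm_add_sq_real, real_inner_smul_left, real_inner_smul_right] at hsq
        simp only [norm_smul, Real.norm_eq_abs] at hsq
        rw [hn1, hn2, h01] at hsq
        nlinarith [sq_abs a₁, sq_abs a₂, hsq]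
      set z : ℂ := ⟨a₁ / r, a₂ / r⟩ with hz
      have habs : ‖z‖ = 1 := by
        rw [Complex.norm_def, Complex.normSq_mk]
        have : a₁ / r * (a₁ / r) + a₂ / r * (a₂ / r) = 1 := by
          field_simp; nlinarith [hnorm]
        rw [this, Real.sqrt_one]
      have hz0 : z ≠ 0 := by
        intro h; rw [h] at habs; simp at habs
      refine ⟨z.arg, ?_⟩
      have hcos : Real.cos z.arg = a₁ / r := by
        have := Complex.cos_arg hz0; rw [habs] at this; simpa using this
      have hsin : Real.sin z.arg = a₂ / r := by
        have := Complex.sin_arg z; rw [habs] at this; simpa using this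
      rw [hcos, hsin]
      have e1 : r * (a₁ / r) = a₁ := by field_simp
      have e2 : r * (a₂ / r) = a₂ := by field_simp
      rw [e1, e2]
      have hx : x = c + (a₁ • v₁ + a₂ • v₂) := by rw [← hxdec]; abel
      rw [hx]; abel
    · rintro ⟨θ, rfl⟩
      set y : E3 := (r * Real.cos θ) • v₁ + (r * Real.sin θ) • v₂ with hy
      have hpx : ⟪c + (r * Real.cos θ) • v₁ + (r * Real.sin θ) • v₂, n⟫ = k := by
        rw [inner_add_left, inner_add_left, real_inner_smul_left, real_inner_smul_left,
          hv₁n, hv₂n, hcn]; ring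
      refine ⟨hpx, ?_⟩
      rw [hmem _ hpx, dist_eq_norm]
      have hdiff : c + (r * Real.cos θ) • v₁ + (r * Real.sin θ) • v₂ - c = y := by
        rw [hy]; abel
      rw [hdiff]
      have hnsq : ‖y‖^2 = r^2 := by
        rw [hy, norm_add_sq_real, real_inner_smul_left, real_inner_smul_right, h01]
        simp only [norm_smul, Real.norm_eq_abs, hn1, hn2, mul_one]
        rw [sq_abs, sq_abs]
        linear_combination (r^2) * Real.sin_sq_add_cos_sq θ
      rw [show ‖y‖ = Real.sqrt (‖y‖^2) from (Real.sqrt_sq (norm_nonneg y)).symm, hnsq,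
        Real.sqrt_sq (le_of_lt hrpos)]

def pt (a b c : ℝ) : E3 := WithLp.toLp 2 ![a, b, c]

@[simp] lemma pt0 (a b c : ℝ) : pt a b c 0 = a := rfl
@[simp] lemma pt1 (a b c : ℝ) : pt a b c 1 = b := rfl
@[simp] lemma pt2 (a b c : ℝ) : pt a b c 2 = c := rfl

lemma e3_ext {x y : E3} (h0 : x 0 = y 0) (h1 : x 1 = y 1) (h2 : x 2 = y 2) : x = y := by
  ext i
  fin_cases i <;> assumption

lemma inner3 (x y : E3) : ⟪x, y⟫ = x 0 * y 0 + x 1 * y 1 + x 2 * y 2 := by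
  rw [PiLp.inner_apply, Fin.sum_univ_three]
  simp [RCLike.inner_apply]
  ring

lemma dist3_sq (x y : E3) :
    dist x y ^ 2 = (x 0 - y 0)^2 + (x 1 - y 1)^2 + (x 2 - y 2)^2 := by
  rw [EuclideanSpace.dist_eq, Fin.sum_univ_three, Real.sq_sqrt (by positivity)]
  simp [Real.dist_eq, sq_abs]

lemma dist_eq_sqrt_iff (a c : E3) (K : ℝ) (hK : 0 ≤ K) :
    dist a c = Real.sqrt K ↔ dist a c ^ 2 = K := by
  constructor
  · intro h; rw [h, Real.sq_sqrt hK]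
  · intro h; rw [← h, Real.sqrt_sq dist_nonneg]

def sphS (s : ℝ) : Set E3 := {x | dist x (pt 0 0 s) = Real.sqrt (1 + s^2)}
def sphT (u : ℝ) : Set E3 := {x | dist x (pt 1 u 0) = Real.sqrt (1 + u^2)}

lemma mem_sphS {s : ℝ} {x : E3} :
    x ∈ sphS s ↔ x 0^2 + x 1^2 + x 2^2 = 1 + 2*s*(x 2) := by
  rw [sphS, Set.mem_setOf_eq, dist_eq_sqrt_iff _ _ _ (by positivity), dist3_sq]
  simp only [pt0, pt1, pt2]
  constructor <;> intro h <;> nlinarith [h]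

lemma mem_sphT {u : ℝ} {x : E3} :
    x ∈ sphT u ↔ x 0^2 + x 1^2 + x 2^2 = 2*(x 0) + 2*u*(x 1) := by
  rw [sphT, Set.mem_setOf_eq, dist_eq_sqrt_iff _ _ _ (by positivity), dist3_sq]
  simp only [pt0, pt1, pt2]
  constructor <;> intro h <;> nlinarith [h]

def ptL (t : ℝ) : E3 := pt ((1-t^2)/(1+t^2)) (2*t/(1+t^2)) 0
def ptR (t : ℝ) : E3 := pt (2/(1+t^2)) 0 (2*t/(1+t^2))

lemma one_add_sq_pos (t : ℝ) : (0:ℝ) < 1 + t^2 := by positivity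

lemma ptL_mem_sphS (s t : ℝ) : ptL t ∈ sphS s := by
  rw [mem_sphS, ptL]
  simp only [pt0, pt1, pt2]
  have h := one_add_sq_pos t
  field_simp
  ring

lemma ptL_mem_sphT_iff {u t : ℝ} : ptL t ∈ sphT u ↔ 3*t^2 - 4*u*t - 1 = 0 := by
  rw [mem_sphT, ptL]
  simp only [pt0, pt1, pt2]
  have h := one_add_sq_pos t
  rw [div_pow, div_pow]
  constructor
  · intro he
    have : (1-t^2)^2 + (2*t)^2 = (2*(1-t^2) + 2*u*(2*t)) * (1+t^2) := by
      field_simp at he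
      nlinarith [he]
    nlinarith [this]
  · intro he
    have h4 : 4*u*t = 3*t^2 - 1 := by linarith
    field_simp
    nlinarith [h4]

lemma ptR_mem_sphT (u t : ℝ) : ptR t ∈ sphT u := by
  rw [mem_sphT, ptR]
  simp only [pt0, pt1, pt2]
  have h := one_add_sq_pos t
  field_simp
  ring

lemma ptR_mem_sphS_iff {s t : ℝ} : ptR t ∈ sphS s ↔ t^2 + 4*s*t - 3 = 0 := by
  rw [mem_sphS, ptR]
  simp only [pt0, pt1, pt2]
  have h := one_add_sq_pos t
  rw [div_pow, div_pow]
  constructor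
  · intro he
    have aux : t^2 + 4*s*t - 3 = ((1 + 2*s*(2*t/(1+t^2))) - (2^2/(1+t^2)^2 + 0^2 + (2*t)^2/(1+t^2)^2)) * (1+t^2) := by
      field_simp
      ring
    rw [← he] at aux
    simpa using aux
  · intro he
    have h4 : 4*s*t = 3 - t^2 := by linarith
    field_simp
    nlinarith [h4]

-- parameters
def pL (i : ℕ) : ℝ := (i:ℝ) + 1
def nL (i : ℕ) : ℝ := -1/(3*((i:ℝ)+1))
def uu (i : ℕ) : ℝ := (3*((i:ℝ)+1)^2 - 1)/(4*((i:ℝ)+1))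
def pR (j : ℕ) : ℝ := (j:ℝ) + 1
def nR (j : ℕ) : ℝ := -3/((j:ℝ)+1)
def ss (j : ℕ) : ℝ := (3 - ((j:ℝ)+1)^2)/(4*((j:ℝ)+1))

lemma ipos (i : ℕ) : (0:ℝ) < (i:ℝ) + 1 := by positivity

lemma pL_pos (i : ℕ) : 0 < pL i := ipos i
lemma nL_neg (i : ℕ) : nL i < 0 := by
  rw [nL]; apply div_neg_of_neg_of_pos <;> [norm_num; positivity]
lemma pR_pos (j : ℕ) : 0 < pR j := ipos j
lemma nR_neg (j : ℕ) : nR j < 0 := by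
  rw [nR]; apply div_neg_of_neg_of_pos <;> [norm_num; positivity]

lemma rootsL {i : ℕ} {t : ℝ} : 3*t^2 - 4*(uu i)*t - 1 = 0 ↔ t = pL i ∨ t = nL i := by
  have hp := ipos i
  have key : 3*t^2 - 4*(uu i)*t - 1 = 3*(t - pL i)*(t - nL i) := by
    rw [uu, pL, nL]
    field_simp
    ring
  rw [key]
  constructor
  · intro h
    rcases mul_eq_zero.1 h with h' | h'
    · rcases mul_eq_zero.1 h' with h'' | h''
      · norm_num at h''
      · left; linarith [sub_eq_zero.1 h'']
    · right; linarith [sub_eq_zero.1 h']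
  · rintro (rfl | rfl) <;> ring
lemma rootsR {j : ℕ} {t : ℝ} : t^2 + 4*(ss j)*t - 3 = 0 ↔ t = pR j ∨ t = nR j := by
  have hp := ipos j
  have key : t^2 + 4*(ss j)*t - 3 = (t - pR j)*(t - nR j) := by
    rw [ss, pR, nR]
    field_simp
    ring
  rw [key]
  constructor
  · intro h
    rcases mul_eq_zero.1 h with h' | h'
    · left; linarith [sub_eq_zero.1 h']
    · right; linarith [sub_eq_zero.1 h']
  · rintro (rfl | rfl) <;> ring

lemma uu_inj {i i' : ℕ} (h : uu i = uu i') : i = i' := by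
  rw [uu, uu] at h
  have h1 := ipos i
  have h2 := ipos i'
  field_simp at h
  have key : (((i:ℝ)+1) - ((i':ℝ)+1)) * (12*((i:ℝ)+1)*((i':ℝ)+1) + 4) = 0 := by nlinarith [h]
  rcases mul_eq_zero.1 key with h' | h'
  · have : (i:ℝ) = (i':ℝ) := by linarith
    exact_mod_cast this
  · nlinarith [h1, h2]

lemma ss_inj {j j' : ℕ} (h : ss j = ss j') : j = j' := by
  rw [ss, ss] at h
  have h1 := ipos j
  have h2 := ipos j'
  field_simp at h
  have key : (((j:ℝ)+1) - ((j':ℝ)+1)) * (12 + 4*((j:ℝ)+1)*((j':ℝ)+1)) = 0 := by nlinarith [h]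
  rcases mul_eq_zero.1 key with h' | h'
  · have : (j:ℝ) = (j':ℝ) := by linarith
    exact_mod_cast this
  · nlinarith [h1, h2]

lemma S_S_inter {j j' : ℕ} {x : E3} (h : x ∈ sphS (ss j)) (h' : x ∈ sphS (ss j'))
    (hne : j ≠ j') : x 2 = 0 ∧ x 0^2 + x 1^2 = 1 := by
  rw [mem_sphS] at h h'
  have hss : ss j ≠ ss j' := fun hc => hne (ss_inj hc)
  have hz : x 2 = 0 := by
    by_contra hc
    apply hss
    have := h.symm.trans h'
    field_simp at this
    rcases mul_eq_zero.1 (by linarith : (ss j - ss j') * (2 * x 2) = 0) with h'' | h''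
    · linarith
    · exact absurd (by linarith) hc
  rw [hz] at h
  exact ⟨hz, by nlinarith [h]⟩

lemma T_T_inter {i i' : ℕ} {x : E3} (h : x ∈ sphT (uu i)) (h' : x ∈ sphT (uu i'))
    (hne : i ≠ i') : x 1 = 0 ∧ x 0^2 + x 2^2 = 2 * x 0 := by
  rw [mem_sphT] at h h'
  have huu : uu i ≠ uu i' := fun hc => hne (uu_inj hc)
  have hy : x 1 = 0 := by
    by_contra hc
    apply huu
    have := h.symm.trans h'
    rcases mul_eq_zero.1 (by linarith : (uu i - uu i') * (2 * x 1) = 0) with h'' | h''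
    · linarith
    · exact absurd (by linarith) hc
  rw [hy] at h
  exact ⟨hy, by nlinarith [h]⟩

lemma gammaL_param {u : ℝ} {x : E3} (hz : x 2 = 0) (hc : x 0^2 + x 1^2 = 1)
    (hT : x ∈ sphT u) : ∃ t, x = ptL t ∧ 3*t^2 - 4*u*t - 1 = 0 := by
  have hx0 : x 0 ≠ -1 := by
    intro h
    rw [mem_sphT, hz] at hT
    have hsq : x 1 ^ 2 = 0 := by nlinarith [hc]
    have h1 : x 1 = 0 := by
      have := sq_nonneg (x 1); nlinarith [hsq]
    rw [h, h1] at hT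
    norm_num at hT
  have hden : 1 + x 0 ≠ 0 := by intro h; apply hx0; linarith
  refine ⟨x 1 / (1 + x 0), ?_, ?_⟩
  · apply e3_ext
    · rw [ptL, pt0]
      field_simp
      linear_combination (x 0 + 1) * hc
    · rw [ptL, pt1]
      field_simp
      linear_combination x 1 * hc
    · rw [ptL, pt2]; exact hz
  · rw [mem_sphT, hz] at hT
    have key : x 0^2 + x 1^2 = 2*(x 0) + 2*u*(x 1) := by nlinarith [hT]
    field_simp
    nlinarith [key, hc]

lemma gammaR_param {s : ℝ} {x : E3} (hy : x 1 = 0) (hc : x 0^2 + x 2^2 = 2 * x 0)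
    (hS : x ∈ sphS s) : ∃ t, x = ptR t ∧ t^2 + 4*s*t - 3 = 0 := by
  have hx0 : x 0 ≠ 0 := by
    intro h
    rw [h] at hc
    have h2 : x 2 = 0 := by nlinarith [hc]
    rw [mem_sphS, hy, h, h2] at hS
    norm_num at hS
  refine ⟨x 2 / x 0, ?_, ?_⟩
  · apply e3_ext
    · rw [ptR, pt0]
      field_simp
      linear_combination hc
    · rw [ptR, pt1]; exact hy
    · rw [ptR, pt2]
      field_simp
      linear_combination x 2 * hc
  · rw [mem_sphS, hy] at hS
    have key : x 0^2 + x 2^2 = 1 + 2*s*(x 2) := by nlinarith [hS]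
    field_simp
    nlinarith [key, hc]

lemma gammas_disjoint {x : E3} (hz : x 2 = 0) (hcL : x 0^2 + x 1^2 = 1)
    (hy : x 1 = 0) (hcR : x 0^2 + x 2^2 = 2 * x 0) : False := by
  rw [hy] at hcL
  rw [hz] at hcR
  nlinarith [hcL, hcR]

lemma ptL_inj {t t' : ℝ} (h : ptL t = ptL t') : t = t' := by
  have h0 := congrFun (congrArg WithLp.ofLp h) 0
  have h1 := congrFun (congrArg WithLp.ofLp h) 1
  rw [ptL, ptL] at h0 h1
  simp only [pt0, pt1] at h0 h1
  have p := one_add_sq_pos t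
  have p' := one_add_sq_pos t'
  field_simp at h0 h1
  nlinarith [h0, h1, sq_nonneg (t - t'), sq_nonneg (t + t'), sq_nonneg (t*t' - 1), sq_nonneg (t*t' + 1)]

lemma ptR_inj {t t' : ℝ} (h : ptR t = ptR t') : t = t' := by
  have h0 := congrFun (congrArg WithLp.ofLp h) 0
  have h2 := congrFun (congrArg WithLp.ofLp h) 2
  rw [ptR, ptR] at h0 h2
  simp only [pt0, pt2] at h0 h2
  have p := one_add_sq_pos t
  have p' := one_add_sq_pos t'
  field_simp at h0 h2
  have key : (t - t') * (2 + 2*t^2) = 0 := by linear_combination 2*h2 - 2*t*h0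
  rcases mul_eq_zero.1 key with h' | h'
  · linarith
  · nlinarith [sq_nonneg t]

lemma ptL_y (t : ℝ) : (ptL t) 1 = 2*t/(1+t^2) := rfl
lemma ptL_z (t : ℝ) : (ptL t) 2 = 0 := rfl
lemma ptR_y (t : ℝ) : (ptR t) 1 = 0 := rfl
lemma ptR_z (t : ℝ) : (ptR t) 2 = 2*t/(1+t^2) := rfl

-- ===================== chunk 6 =====================
def CC (i j : ℕ) : Set E3 := sphT (uu i) ∩ sphS (ss j)
def nvec (i j : ℕ) : E3 := pt 1 (uu i) (-(ss j))

lemma nvec_ne (i j : ℕ) : nvec i j ≠ 0 := by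
  intro h
  have := congrFun (congrArg WithLp.ofLp h) 0
  rw [nvec] at this
  simp at this

lemma CC_eq (i j : ℕ) : CC i j =
    {x : E3 | ⟪x, nvec i j⟫ = 1/2 ∧ dist x (pt 0 0 (ss j)) = Real.sqrt (1 + (ss j)^2)} := by
  ext x
  have hin : ⟪x, nvec i j⟫ = x 0 + uu i * (x 1) - ss j * (x 2) := by
    rw [inner3, nvec]; simp; ring
  constructor
  · rintro ⟨hT, hS⟩
    have hS' := hS
    rw [mem_sphT] at hT
    rw [mem_sphS] at hS
    exact ⟨by rw [hin]; linarith, hS'⟩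
  · rintro ⟨hpl, hS⟩
    have hS' : x ∈ sphS (ss j) := hS
    refine ⟨?_, hS'⟩
    rw [mem_sphT]
    rw [hin] at hpl
    rw [mem_sphS] at hS'
    linarith

lemma pL_ne_nL (i i' : ℕ) : pL i ≠ nL i' := by
  have := pL_pos i; have := nL_neg i'; intro h; linarith
lemma pR_ne_nR (j j' : ℕ) : pR j ≠ nR j' := by
  have := pR_pos j; have := nR_neg j'; intro h; linarith

lemma ptL_mem_CC {i j : ℕ} {t : ℝ} (ht : t = pL i ∨ t = nL i) : ptL t ∈ CC i j :=
  ⟨ptL_mem_sphT_iff.2 (rootsL.2 ht), ptL_mem_sphS _ _⟩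
lemma ptR_mem_CC {i j : ℕ} {t : ℝ} (ht : t = pR j ∨ t = nR j) : ptR t ∈ CC i j :=
  ⟨ptR_mem_sphT _ _, ptR_mem_sphS_iff.2 (rootsR.2 ht)⟩

lemma CC_circle_data (i j : ℕ) : IsCircle 3 (CC i j) ∧
    ∃ (c : E3) (r : ℝ) (v₁ v₂ : E3), 0 < r ∧
      (∀ x : E3, x ∈ CC i j ↔
        ∃ θ : ℝ, x = c + (r * Real.cos θ) • v₁ + (r * Real.sin θ) • v₂) := by
  have h₀ : ptL (pL i) ∈ CC i j := ptL_mem_CC (Or.inl rfl)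
  have h₁ : ptL (nL i) ∈ CC i j := ptL_mem_CC (Or.inr rfl)
  rw [CC_eq] at h₀ h₁
  have hne : ptL (pL i) ≠ ptL (nL i) := fun h => pL_ne_nL i i (ptL_inj h)
  obtain ⟨hcirc, c, r, v₁, v₂, hr, _, _, _, hiff⟩ :=
    sphere_plane_circle (pt 0 0 (ss j)) (nvec i j) (Real.sqrt (1 + (ss j)^2)) (1/2)
      (nvec_ne i j) (ptL (pL i)) (ptL (nL i)) h₀.1 h₀.2 h₁.1 h₁.2 hne
  constructor
  · rw [CC_eq]; exact hcirc
  · refine ⟨c, r, v₁, v₂, hr, fun x => ?_⟩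
    rw [CC_eq]
    exact hiff x

def quad (σ τ : ℝ) (i j : ℕ) : Set E3 :=
  {x | x ∈ CC i j ∧ 0 ≤ σ * x 1 ∧ 0 ≤ τ * x 2}

lemma quad_subset {σ τ : ℝ} {i j : ℕ} : quad σ τ i j ⊆ CC i j := fun _ h => h.1

lemma CC_isCircle (i j : ℕ) : IsCircle 3 (CC i j) := (CC_circle_data i j).1

lemma quad_isArc (i j : ℕ) (σ τ : ℝ) (hσ : σ = 1 ∨ σ = -1) (hτ : τ = 1 ∨ τ = -1) :
    IsArc 3 (quad σ τ i j) := by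
  obtain ⟨hcirc, c, r, v₁, v₂, hr, hmem⟩ := CC_circle_data i j
  set P : ℝ → E3 := fun θ => c + (r * Real.cos θ) • v₁ + (r * Real.sin θ) • v₂ with hP
  have hPcoord : ∀ (θ : ℝ) (l : Fin 3),
      P θ l = c l + (r * Real.cos θ) * (v₁ l) + (r * Real.sin θ) * (v₂ l) := by
    intro θ l
    rw [hP]
    simp [PiLp.add_apply, PiLp.smul_apply, smul_eq_mul]
  have hPper : ∀ (θ : ℝ) (k : ℤ), P (θ + 2*k*π) = P θ := by
    intro θ k
    rw [hP]
    simp only []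
    have hc : Real.cos (θ + 2*k*π) = Real.cos θ := by
      have := Real.cos_sub_int_mul_two_pi (θ + 2*k*π) k
      rw [← this]; ring_nf
    have hs : Real.sin (θ + 2*k*π) = Real.sin θ := by
      have := Real.sin_sub_int_mul_two_pi (θ + 2*k*π) k
      rw [← this]; ring_nf
    rw [hc, hs]
  have hσ0 : σ ≠ 0 := by rcases hσ with rfl | rfl <;> norm_num
  have hτ0 : τ ≠ 0 := by rcases hτ with rfl | rfl <;> norm_num
  have hτsq : τ * τ = 1 := by rcases hτ with rfl | rfl <;> norm_num
  -- parameters of the four special points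
  obtain ⟨θ₁, hθ₁⟩ := (hmem (ptR (pR j))).1 (ptR_mem_CC (Or.inl rfl))
  obtain ⟨θ₂, hθ₂⟩ := (hmem (ptR (nR j))).1 (ptR_mem_CC (Or.inr rfl))
  obtain ⟨θ₃, hθ₃⟩ := (hmem (ptL (if σ = 1 then pL i else nL i))).1
    (ptL_mem_CC (by split <;> [exact Or.inl rfl; exact Or.inr rfl]))
  have hPθ₁ : P θ₁ = ptR (pR j) := hθ₁.symm
  have hPθ₂ : P θ₂ = ptR (nR j) := hθ₂.symm
  have hPθ₃ : P θ₃ = ptL (if σ = 1 then pL i else nL i) := hθ₃.symm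
  -- trig forms
  set A : ℝ := σ * c 1 with hA
  set B : ℝ := σ * (r * v₁ 1) with hB
  set Cc : ℝ := σ * (r * v₂ 1) with hCc
  set A' : ℝ := τ * c 2 with hA'
  set B' : ℝ := τ * (r * v₁ 2) with hB'
  set C' : ℝ := τ * (r * v₂ 2) with hC'
  have hG : ∀ θ, A + B*Real.cos θ + Cc*Real.sin θ = σ * (P θ 1) := by
    intro θ; rw [hPcoord θ 1, hA, hB, hCc]; ring
  have hH : ∀ θ, A' + B'*Real.cos θ + C'*Real.sin θ = τ * (P θ 2) := by
    intro θ; rw [hPcoord θ 2, hA', hB', hC']; ring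
  have h1 : A + B*Real.cos θ₁ + Cc*Real.sin θ₁ = 0 := by
    rw [hG, hPθ₁, ptR_y]; ring
  have h2 : A + B*Real.cos θ₂ + Cc*Real.sin θ₂ = 0 := by
    rw [hG, hPθ₂, ptR_y]; ring
  have hneq : ∀ k : ℤ, θ₁ ≠ θ₂ + 2*k*π := by
    intro k hk
    have : P θ₁ = P θ₂ := by rw [hk, hPper]
    rw [hPθ₁, hPθ₂] at this
    exact pR_ne_nR j j (ptR_inj this)
  have hyθ₃ : (ptL (if σ = 1 then pL i else nL i)) 1 ≠ 0 := by
    rcases hσ with rfl | rfl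
    · rw [if_pos rfl, ptL_y]
      have := pL_pos i
      have h1p := one_add_sq_pos (pL i)
      positivity
    · rw [if_neg (by norm_num), ptL_y]
      have hne := nL_neg i
      have h1p := one_add_sq_pos (nL i)
      exact ne_of_lt (div_neg_of_neg_of_pos (by linarith) h1p)
  have h3 : A + B*Real.cos θ₃ + Cc*Real.sin θ₃ ≠ 0 := by
    rw [hG, hPθ₃]
    exact mul_ne_zero hσ0 hyθ₃
  have hzpos : (0:ℝ) < (ptR (pR j)) 2 := by
    rw [ptR_z]
    have := pR_pos j
    have := one_add_sq_pos (pR j)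
    positivity
  have hzneg : (ptR (nR j)) 2 < 0 := by
    rw [ptR_z]
    have := nR_neg j
    have := one_add_sq_pos (nR j)
    apply div_neg_of_neg_of_pos _ this
    linarith
  have hs : (A' + B'*Real.cos θ₁ + C'*Real.sin θ₁) * (A' + B'*Real.cos θ₂ + C'*Real.sin θ₂) < 0 := by
    rw [hH, hH, hPθ₁, hPθ₂]
    have : τ * (ptR (pR j)) 2 * (τ * (ptR (nR j)) 2)
        = (τ*τ) * ((ptR (pR j)) 2 * (ptR (nR j)) 2) := by ring
    rw [this, hτsq, one_mul]
    exact mul_neg_of_pos_of_neg hzpos hzneg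
  obtain ⟨a, b, hab1, hab2⟩ := coreGen A B Cc A' B' C' θ₁ θ₂ θ₃ h1 h2 hneq h3 hs
  have hquad_eq : quad σ τ i j = P '' Set.Icc a b := by
    ext x
    constructor
    · rintro ⟨hC, hy, hz⟩
      obtain ⟨θ₀, hθ₀⟩ := (hmem x).1 hC
      have hPx : P θ₀ = x := hθ₀.symm
      have hGx : 0 ≤ A + B*Real.cos θ₀ + Cc*Real.sin θ₀ := by
        rw [hG, hPx]; exact hy
      have hHx : 0 ≤ A' + B'*Real.cos θ₀ + C'*Real.sin θ₀ := by
        rw [hH, hPx]; exact hz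
      obtain ⟨θ, hθmem, k, hk⟩ := hab2 θ₀ hGx hHx
      refine ⟨θ, hθmem, ?_⟩
      rw [← hPx, hk]
      exact (hPper θ k).symm
    · rintro ⟨θ, hθmem, rfl⟩
      obtain ⟨hGθ, hHθ⟩ := hab1 θ hθmem
      rw [hG] at hGθ
      rw [hH] at hHθ
      exact ⟨(hmem _).2 ⟨θ, rfl⟩, hGθ, hHθ⟩
  have hcont : Continuous P := by
    rw [hP]; fun_prop
  have hnonempty : (quad σ τ i j).Nonempty := by
    refine ⟨ptL (if σ = 1 then pL i else nL i),
      ptL_mem_CC (by split <;> [exact Or.inl rfl; exact Or.inr rfl]), ?_, ?_⟩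
    · rcases hσ with rfl | rfl
      · rw [if_pos rfl, ptL_y]
        have := pL_pos i
        have h1p := one_add_sq_pos (pL i)
        positivity
      · rw [if_neg (by norm_num), ptL_y]
        have hne := nL_neg i
        have h1p := one_add_sq_pos (nL i)
        have hdn : 2*(nL i)/(1+(nL i)^2) < 0 :=
          div_neg_of_neg_of_pos (by linarith) h1p
        nlinarith [hdn]
    · rw [ptL_z]; simp
  refine ⟨CC i j, hcirc, quad_subset, ?_, ?_⟩
  · rw [hquad_eq]; exact isCompact_Icc.image hcont
  · rw [hquad_eq] at hnonempty ⊢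
    exact ⟨hnonempty, (isPreconnected_Icc).image P hcont.continuousOn⟩


def tL (a : ℕ) : ℝ := if a % 2 = 0 then pL (a/2) else nL (a/2)
def tR (b : ℕ) : ℝ := if b % 2 = 0 then pR (b/2) else nR (b/2)
def sgn (a : ℕ) : ℝ := if a % 2 = 0 then 1 else -1

lemma sgn_cases (a : ℕ) : sgn a = 1 ∨ sgn a = -1 := by
  rw [sgn]; split <;> simp

lemma tL_root (a : ℕ) : tL a = pL (a/2) ∨ tL a = nL (a/2) := by
  rw [tL]; split <;> simp

lemma tR_root (b : ℕ) : tR b = pR (b/2) ∨ tR b = nR (b/2) := by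
  rw [tR]; split <;> simp

lemma tR_ne_zero (b : ℕ) : tR b ≠ 0 := by
  rcases tR_root b with h | h <;> rw [h]
  · exact ne_of_gt (pR_pos _)
  · exact ne_of_lt (nR_neg _)

lemma yL_pos {t : ℝ} (h : 0 < t) : 0 < (ptL t) 1 := by
  rw [ptL_y]; have := one_add_sq_pos t; positivity
lemma yL_neg {t : ℝ} (h : t < 0) : (ptL t) 1 < 0 := by
  rw [ptL_y]; exact div_neg_of_neg_of_pos (by linarith) (one_add_sq_pos t)
lemma zR_pos {t : ℝ} (h : 0 < t) : 0 < (ptR t) 2 := by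
  rw [ptR_z]; have := one_add_sq_pos t; positivity
lemma zR_neg {t : ℝ} (h : t < 0) : (ptR t) 2 < 0 := by
  rw [ptR_z]; exact div_neg_of_neg_of_pos (by linarith) (one_add_sq_pos t)

lemma sgn_mul_yL (a : ℕ) : 0 ≤ sgn a * (ptL (tL a)) 1 := by
  rw [sgn, tL]; split
  · have := yL_pos (pL_pos (a/2)); linarith
  · have := yL_neg (nL_neg (a/2)); nlinarith

lemma sgn_mul_zR (b : ℕ) : 0 ≤ sgn b * (ptR (tR b)) 2 := by
  rw [sgn, tR]; split
  · have := zR_pos (pR_pos (b/2)); linarith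
  · have := zR_neg (nR_neg (b/2)); nlinarith

lemma L_in_quad (a j : ℕ) (τ : ℝ) : ptL (tL a) ∈ quad (sgn a) τ (a/2) j :=
  ⟨ptL_mem_CC (tL_root a), sgn_mul_yL a, by rw [ptL_z]; simp⟩

lemma R_in_quad (b i : ℕ) (σ : ℝ) : ptR (tR b) ∈ quad σ (sgn b) i (b/2) :=
  ⟨ptR_mem_CC (tR_root b), by rw [ptR_y]; simp, sgn_mul_zR b⟩

lemma CC_z0 {i j : ℕ} {x : E3} (h : x ∈ CC i j) (hz : x 2 = 0) :
    x = ptL (pL i) ∨ x = ptL (nL i) := by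
  obtain ⟨hT, hS⟩ := h
  rw [mem_sphS] at hS
  have hc : x 0^2 + x 1^2 = 1 := by rw [hz] at hS; nlinarith [hS]
  obtain ⟨t, rfl, hroot⟩ := gammaL_param hz hc hT
  rcases rootsL.1 hroot with h | h
  · left; rw [h]
  · right; rw [h]

lemma CC_y0 {i j : ℕ} {x : E3} (h : x ∈ CC i j) (hy : x 1 = 0) :
    x = ptR (pR j) ∨ x = ptR (nR j) := by
  obtain ⟨hT, hS⟩ := h
  rw [mem_sphT] at hT
  have hc : x 0^2 + x 2^2 = 2 * x 0 := by rw [hy] at hT; nlinarith [hT]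
  obtain ⟨t, rfl, hroot⟩ := gammaR_param hy hc hS
  rcases rootsR.1 hroot with h | h
  · left; rw [h]
  · right; rw [h]

lemma CC_yz_false {i j : ℕ} {x : E3} (h : x ∈ CC i j) (hy : x 1 = 0) (hz : x 2 = 0) :
    False := by
  obtain ⟨hT, hS⟩ := h
  rw [mem_sphT] at hT
  rw [mem_sphS] at hS
  apply gammas_disjoint hz ?_ hy ?_
  · rw [hz] at hS; nlinarith [hS]
  · rw [hy] at hT; nlinarith [hT]

lemma quad_z0_eq {a j : ℕ} {τ : ℝ} {x : E3} (hq : x ∈ quad (sgn a) τ (a/2) j)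
    (hz : x 2 = 0) : x = ptL (tL a) := by
  obtain ⟨hC, hy, -⟩ := hq
  rcases CC_z0 hC hz with h | h
  · by_cases hpar : a % 2 = 0
    · rw [h, tL, if_pos hpar]
    · exfalso
      rw [h, sgn, if_neg hpar] at hy
      have := yL_pos (pL_pos (a/2))
      nlinarith
  · by_cases hpar : a % 2 = 0
    · exfalso
      rw [h, sgn, if_pos hpar] at hy
      have := yL_neg (nL_neg (a/2))
      nlinarith
    · rw [h, tL, if_neg hpar]

lemma quad_y0_eq {b i : ℕ} {σ : ℝ} {x : E3} (hq : x ∈ quad σ (sgn b) i (b/2))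
    (hy : x 1 = 0) : x = ptR (tR b) := by
  obtain ⟨hC, -, hzs⟩ := hq
  rcases CC_y0 hC hy with h | h
  · by_cases hpar : b % 2 = 0
    · rw [h, tR, if_pos hpar]
    · exfalso
      rw [h, sgn, if_neg hpar] at hzs
      have := zR_pos (pR_pos (b/2))
      nlinarith
  · by_cases hpar : b % 2 = 0
    · exfalso
      rw [h, sgn, if_pos hpar] at hzs
      have := zR_neg (nR_neg (b/2))
      nlinarith
    · rw [h, tR, if_neg hpar]

lemma opp_zero {τ v : ℝ} (hτ : τ = 1 ∨ τ = -1) (h1 : 0 ≤ τ * v) (h2 : 0 ≤ -τ * v) :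
    v = 0 := by rcases hτ with rfl | rfl <;> linarith

lemma sgn_opp {b b' : ℕ} (hne : b ≠ b') (h2 : b / 2 = b' / 2) : sgn b' = -(sgn b) := by
  have hpar : b % 2 ≠ b' % 2 := by omega
  rcases Nat.mod_two_eq_zero_or_one b with h | h <;>
    rcases Nat.mod_two_eq_zero_or_one b' with h' | h'
  · exact absurd (h.trans h'.symm) hpar
  · norm_num [sgn, h, h']
  · norm_num [sgn, h, h']
  · exact absurd (h.trans h'.symm) hpar

lemma both_y1 {a a' b b' : ℕ} {x : E3} (h : x ∈ quad (sgn a) (sgn b) (a/2) (b/2))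
    (h' : x ∈ quad (sgn a') (sgn b') (a'/2) (b'/2)) (hne : a ≠ a') : x 1 = 0 := by
  by_cases hi : a/2 = a'/2
  · apply opp_zero (sgn_cases a) h.2.1
    have hso := sgn_opp hne hi
    have h2 := h'.2.1
    rw [hso] at h2
    exact h2
  · exact (T_T_inter h.1.1 h'.1.1 hi).1

lemma both_z2 {a a' b b' : ℕ} {x : E3} (h : x ∈ quad (sgn a) (sgn b) (a/2) (b/2))
    (h' : x ∈ quad (sgn a') (sgn b') (a'/2) (b'/2)) (hne : b ≠ b') : x 2 = 0 := by
  by_cases hj : b/2 = b'/2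
  · apply opp_zero (sgn_cases b) h.2.2
    have hso := sgn_opp hne hj
    have h2 := h'.2.2
    rw [hso] at h2
    exact h2
  · exact (S_S_inter h.1.2 h'.1.2 hj).1

lemma pL_injN {i i' : ℕ} (h : pL i = pL i') : i = i' := by
  rw [pL, pL] at h
  exact_mod_cast (by linarith : (i:ℝ) = i')

lemma nL_injN {i i' : ℕ} (h : nL i = nL i') : i = i' := by
  rw [nL, nL] at h
  have h1 : (0:ℝ) < (i:ℝ)+1 := by positivity
  have h2 : (0:ℝ) < (i':ℝ)+1 := by positivity
  field_simp at h
  exact_mod_cast (by linarith : (i:ℝ) = i')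

lemma nR_injN {j j' : ℕ} (h : nR j = nR j') : j = j' := by
  rw [nR, nR] at h
  have h1 : (0:ℝ) < (j:ℝ)+1 := by positivity
  have h2 : (0:ℝ) < (j':ℝ)+1 := by positivity
  field_simp at h
  exact_mod_cast (by linarith : (j:ℝ) = j')

lemma tL_inj {a a' : ℕ} (h : tL a = tL a') : a = a' := by
  rw [tL, tL] at h
  by_cases h1 : a % 2 = 0 <;> by_cases h2 : a' % 2 = 0
  · rw [if_pos h1, if_pos h2] at h; have := pL_injN h; omega
  · rw [if_pos h1, if_neg h2] at h
    have := pL_pos (a/2); have := nL_neg (a'/2); linarith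
  · rw [if_neg h1, if_pos h2] at h
    have := pL_pos (a'/2); have := nL_neg (a/2); linarith
  · rw [if_neg h1, if_neg h2] at h; have := nL_injN h; omega

lemma tR_inj {b b' : ℕ} (h : tR b = tR b') : b = b' := by
  rw [tR, tR] at h
  by_cases h1 : b % 2 = 0 <;> by_cases h2 : b' % 2 = 0
  · rw [if_pos h1, if_pos h2] at h
    rw [pR, pR] at h
    have : b/2 = b'/2 := by exact_mod_cast (by linarith : ((b/2 : ℕ):ℝ) = ((b'/2 : ℕ):ℝ))
    omega
  · rw [if_pos h1, if_neg h2] at h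
    have := pR_pos (b/2); have := nR_neg (b'/2); linarith
  · rw [if_neg h1, if_pos h2] at h
    have := pR_pos (b'/2); have := nR_neg (b/2); linarith
  · rw [if_neg h1, if_neg h2] at h; have := nR_injN h; omega

def posMap (p q : ℕ) : (Fin p ⊕ Fin q) → E3
  | Sum.inl a => ptL (tL a.1)
  | Sum.inr b => ptR (tR b.1)

lemma ptL_ne_ptR {t t' : ℝ} (ht' : t' ≠ 0) : ptL t ≠ ptR t' := by
  intro h
  have h2 := congrFun (congrArg WithLp.ofLp h) 2
  rw [ptL_z, ptR_z] at h2
  have h1p := one_add_sq_pos t'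
  field_simp at h2
  exact ht' (by linarith)

lemma posMap_inj (p q : ℕ) : Function.Injective (posMap p q) := by
  intro u v h
  rcases u with a | b <;> rcases v with a' | b'
  · simp only [posMap] at h
    exact congrArg Sum.inl (Fin.ext (tL_inj (ptL_inj h)))
  · exact absurd h (ptL_ne_ptR (tR_ne_zero b'.1))
  · exact absurd h.symm (ptL_ne_ptR (tR_ne_zero b.1))
  · simp only [posMap] at h
    exact congrArg Sum.inr (Fin.ext (tR_inj (ptR_inj h)))

def arcFun (p q : ℕ) : Sym2 (Fin p ⊕ Fin q) → Set E3 :=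
  Sym2.lift ⟨fun u v => match u, v with
    | Sum.inl a, Sum.inr b => quad (sgn a.1) (sgn b.1) (a.1/2) (b.1/2)
    | Sum.inr b, Sum.inl a => quad (sgn a.1) (sgn b.1) (a.1/2) (b.1/2)
    | _, _ => ∅,
    by intro u v; rcases u with a|b <;> rcases v with a'|b' <;> rfl⟩

lemma arcFun_eval (p q : ℕ) (a : Fin p) (b : Fin q) :
    arcFun p q s(Sum.inl a, Sum.inr b) = quad (sgn a.1) (sgn b.1) (a.1/2) (b.1/2) := by
  rw [arcFun, Sym2.lift_mk]

lemma edge_form {p q : ℕ} {e : Sym2 (Fin p ⊕ Fin q)}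
    (he : e ∈ (completeBipartiteGraph (Fin p) (Fin q)).edgeSet) :
    ∃ (a : Fin p) (b : Fin q), e = s(Sum.inl a, Sum.inr b) := by
  induction e using Sym2.ind with
  | _ u v =>
    rw [SimpleGraph.mem_edgeSet] at he
    rcases u with a | b <;> rcases v with a' | b'
    · simp [completeBipartiteGraph] at he
    · exact ⟨a, b', rfl⟩
    · exact ⟨a', b, Sym2.eq_swap⟩
    · simp [completeBipartiteGraph] at he


/-- For all positive integers `p` and `q`, the complete bipartite graph `K_{p,q}` admits a
crossing-free circular-arc drawing in `ℝ³` covered by at most `⌈p/2⌉·⌈q/2⌉` circles. -/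
theorem completeBipartiteGraph_circle_cover_upper_bound (p q : ℕ) (hp : 0 < p) (hq : 0 < q) :
    ∃ (D : CircularArcDrawing 3 (completeBipartiteGraph (Fin p) (Fin q)))
      (𝒞 : Finset (Set (EuclideanSpace ℝ (Fin 3)))),
      (∀ C ∈ 𝒞, IsCircle 3 C) ∧ D.CoveredBy 𝒞 ∧
      𝒞.card ≤ ((p + 1) / 2) * ((q + 1) / 2) := by
  classical
  refine ⟨⟨posMap p q, posMap_inj p q, arcFun p q, ?_, ?_, ?_, ?_⟩,
    Finset.image (fun ij : ℕ × ℕ => CC ij.1 ij.2)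
      ((Finset.range ((p+1)/2)) ×ˢ (Finset.range ((q+1)/2))), ?_, ?_, ?_⟩
  · -- arc_isArc
    intro e he
    obtain ⟨a, b, rfl⟩ := edge_form he
    rw [arcFun_eval]
    exact quad_isArc _ _ _ _ (sgn_cases _) (sgn_cases _)
  · -- endpoint_mem
    intro e he v hv
    obtain ⟨a, b, rfl⟩ := edge_form he
    rw [arcFun_eval]
    rcases Sym2.mem_iff.1 hv with rfl | rfl
    · exact L_in_quad _ _ _
    · exact R_in_quad _ _ _
  · -- crossFree
    intro e he f hf hne
    obtain ⟨a, b, rfl⟩ := edge_form he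
    obtain ⟨a', b', rfl⟩ := edge_form hf
    rw [arcFun_eval, arcFun_eval]
    have hab : ¬(a = a' ∧ b = b') := by
      rintro ⟨rfl, rfl⟩; exact hne rfl
    ext x
    simp only [Set.mem_inter_iff, Set.mem_image, Set.mem_setOf_eq]
    constructor
    · rintro ⟨hx, hx'⟩
      by_cases ha : a = a'
      · have hb : b ≠ b' := fun h => hab ⟨ha, h⟩
        have hbv : b.1 ≠ b'.1 := fun h => hb (Fin.ext h)
        have hz : x 2 = 0 := both_z2 hx hx' hbv
        have hxa : x = ptL (tL a.1) := quad_z0_eq hx hz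
        refine ⟨Sum.inl a, ⟨Sym2.mem_iff.2 (Or.inl rfl), ?_⟩, hxa.symm⟩
        rw [ha]
        exact Sym2.mem_iff.2 (Or.inl rfl)
      · have hav : a.1 ≠ a'.1 := fun h => ha (Fin.ext h)
        by_cases hb : b = b'
        · have hy : x 1 = 0 := both_y1 hx hx' hav
          have hxb : x = ptR (tR b.1) := quad_y0_eq hx hy
          refine ⟨Sum.inr b, ⟨Sym2.mem_iff.2 (Or.inr rfl), ?_⟩, hxb.symm⟩
          rw [hb]
          exact Sym2.mem_iff.2 (Or.inr rfl)
        · exfalso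
          have hbv : b.1 ≠ b'.1 := fun h => hb (Fin.ext h)
          exact CC_yz_false hx.1 (both_y1 hx hx' hav) (both_z2 hx hx' hbv)
    · rintro ⟨w, ⟨hwe, hwf⟩, rfl⟩
      rcases Sym2.mem_iff.1 hwe with rfl | rfl <;> rcases Sym2.mem_iff.1 hwf with h2 | h2
      · have ha : a = a' := by injection h2
        subst ha
        exact ⟨L_in_quad _ _ _, L_in_quad _ _ _⟩
      · exact absurd h2 (by simp)
      · exact absurd h2 (by simp)
      · have hb : b = b' := by injection h2
        subst hb
        exact ⟨R_in_quad _ _ _, R_in_quad _ _ _⟩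
  · -- vertex_mem
    intro e he w hw
    obtain ⟨a, b, rfl⟩ := edge_form he
    rw [arcFun_eval] at hw
    rcases w with a' | b'
    · have hz : (posMap p q (Sum.inl a')) 2 = 0 := ptL_z _
      have heq : posMap p q (Sum.inl a') = ptL (tL a.1) := quad_z0_eq hw hz
      have : a' = a := Fin.ext (tL_inj (ptL_inj heq))
      rw [this]
      exact Sym2.mem_iff.2 (Or.inl rfl)
    · have hy : (posMap p q (Sum.inr b')) 1 = 0 := ptR_y _
      have heq : posMap p q (Sum.inr b') = ptR (tR b.1) := quad_y0_eq hw hy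
      have : b' = b := Fin.ext (tR_inj (ptR_inj heq))
      rw [this]
      exact Sym2.mem_iff.2 (Or.inr rfl)
  · -- circles
    intro C hC
    simp only [Finset.mem_image] at hC
    obtain ⟨ij, -, rfl⟩ := hC
    exact CC_isCircle _ _
  · -- covered
    intro e he
    obtain ⟨a, b, rfl⟩ := edge_form he
    refine ⟨CC (a.1/2) (b.1/2), ?_, ?_⟩
    · apply Finset.mem_image.2
      refine ⟨(a.1/2, b.1/2), Finset.mem_product.2 ⟨?_, ?_⟩, rfl⟩
      · exact Finset.mem_range.2 (by have := a.isLt; omega)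
      · exact Finset.mem_range.2 (by have := b.isLt; omega)
    · show arcFun p q s(Sum.inl a, Sum.inr b) ⊆ CC (a.1/2) (b.1/2)
      rw [arcFun_eval]
      exact quad_subset
  · -- cardinality
    calc (Finset.image (fun ij : ℕ × ℕ => CC ij.1 ij.2)
        ((Finset.range ((p+1)/2)) ×ˢ (Finset.range ((q+1)/2)))).card
        ≤ ((Finset.range ((p+1)/2)) ×ˢ (Finset.range ((q+1)/2))).card :=
          Finset.card_image_le
      _ = ((p + 1) / 2) * ((q + 1) / 2) := by
          rw [Finset.card_product, Finset.card_range, Finset.card_range]
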